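/- arXiv:2509.24249 — 8 statements merged into one kernel-verified Lean document; each statement's English description precedes it below -/
import Mathlib

section
/- Under the quadratic growth of the lower-level objective and boundedness of its gradient by M, for any y in the ambient set Y with dist(y, 𝒴(x)) ≤ ε, we have G(x,y) − v(x) ≥ (μ/4)‖y − y*(x)‖² − Mε − (μ/2)ε², where v(x) = min over 𝒴(x) of G(x,·) and y*(x) is its unique minimizer. -/
/-- Under quadratic growth of the lower-level objective on the feasible region
`S = 𝒴(x)` and boundedness of its gradient by `M` on `Y`, for any `y ∈ Y` with
`dist(y, S) ≤ ε`, we have `G(y) − v ≥ (μ/4)‖y − y*‖² − Mε − (μ/2)ε²`. -/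
theorem statement1 {n : ℕ} (μ M ε : ℝ) (hμ : 0 < μ) (hM : 0 ≤ M) (hε : 0 ≤ ε)
    (Y S : Set (EuclideanSpace ℝ (Fin n)))
    (hYconv : Convex ℝ Y) (hYcomp : IsCompact Y)
    (hSsub : S ⊆ Y) (hSconv : Convex ℝ S) (hSclosed : IsClosed S) (hSne : S.Nonempty)
    (G : EuclideanSpace ℝ (Fin n) → ℝ) (hGdiff : Differentiable ℝ G)
    (hGsc : StrongConvexOn Y μ G)
    (hgrad : ∀ y ∈ Y, ‖gradient G y‖ ≤ M)
    (ystar : EuclideanSpace ℝ (Fin n)) (v : ℝ)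
    (hystar : ystar ∈ S) (hv : v = G ystar)
    (hmin : ∀ z ∈ S, v ≤ G z)
    (hgrowth : ∀ z ∈ S, G z - v ≥ μ / 2 * ‖z - ystar‖ ^ 2)
    (y : EuclideanSpace ℝ (Fin n)) (hy : y ∈ Y) (hdist : Metric.infDist y S ≤ ε) :
    G y - v ≥ μ / 4 * ‖y - ystar‖ ^ 2 - M * ε - μ / 2 * ε ^ 2 := by
  obtain ⟨z, hzS, hz⟩ := hSclosed.exists_infDist_eq_dist hSne y
  have ha : ‖y - z‖ ≤ ε := by
    have : dist y z ≤ ε := hz ▸ hdist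
    simpa [dist_eq_norm] using this
  have ha0 : (0:ℝ) ≤ ‖y - z‖ := norm_nonneg _
  have hfd : ∀ x ∈ Y, ‖fderiv ℝ G x‖ ≤ M := by
    intro x hx
    have := hgrad x hx
    rwa [gradient, LinearIsometryEquiv.norm_map] at this
  have hlip : ‖G y - G z‖ ≤ M * ‖y - z‖ :=
    hYconv.norm_image_sub_le_of_norm_fderiv_le
      (fun x _ => hGdiff x) hfd (hSsub hzS) hy
  have hGy : G y ≥ G z - M * ‖y - z‖ := by
    have := (abs_le.mp (by simpa [Real.norm_eq_abs] using hlip)).1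
    linarith
  have hgr := hgrowth z hzS
  have htri : ‖y - ystar‖ ≤ ‖y - z‖ + ‖z - ystar‖ := norm_sub_le_norm_sub_add_norm_sub y z ystar
  have hc0 : (0:ℝ) ≤ ‖y - ystar‖ := norm_nonneg _
  have hb0 : (0:ℝ) ≤ ‖z - ystar‖ := norm_nonneg _
  nlinarith [sq_nonneg (‖y - z‖ - ‖z - ystar‖), sq_nonneg (‖y - z‖ + ‖z - ystar‖),
    mul_le_mul_of_nonneg_left ha hM, sq_nonneg (ε - ‖y - z‖),
    mul_le_mul htri htri hc0 (by linarith), mul_nonneg ha0 hb0,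
    mul_le_mul ha ha ha0 hε]
end

section
/- If φ : ℝᵖ → ℝ is ρ-strongly convex (ρ ≥ 0) and lower semicontinuous, then its Moreau envelope e^γ(z) = min_λ φ(λ) + (γ/2)‖λ−z‖² is (1/γ + 1/ρ)^{-1}-strongly convex in z. -/
set_option maxHeartbeats 1000000

open Set

private lemma scalar_key {ρ γ m s r t : ℝ} (hρ : 0 < ρ) (hγ : 0 < γ)
    (hm : m * (ρ + γ) = ρ * γ) (hs : 0 ≤ s) (hr : 0 ≤ r) (ht : 0 ≤ t)
    (htri : t ≤ s + r) : m * t ^ 2 ≤ ρ * s ^ 2 + γ * r ^ 2 := by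
  have ht2 : t ^ 2 ≤ (s + r) ^ 2 := by nlinarith
  have h7 : ρ * γ * t ^ 2 ≤ (ρ * s ^ 2 + γ * r ^ 2) * (ρ + γ) := by
    nlinarith [sq_nonneg (ρ * s - γ * r), mul_pos hρ hγ]
  have h8 : m * t ^ 2 * (ρ + γ) ≤ (ρ * s ^ 2 + γ * r ^ 2) * (ρ + γ) := by
    have hL : m * t ^ 2 * (ρ + γ) = ρ * γ * t ^ 2 := by linear_combination t ^ 2 * hm
    rw [hL]; exact h7
  exact le_of_mul_le_mul_right h8 (by linarith)

/-- A lower semicontinuous real function is bounded below on a compact set. -/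
private lemma lsc_bddBelow_on_compact {X : Type*} [TopologicalSpace X] {f : X → ℝ} {s : Set X}
    (hs : IsCompact s) (hf : LowerSemicontinuous f) : ∃ c : ℝ, ∀ x ∈ s, c ≤ f x := by
  obtain ⟨t, ht⟩ := hs.elim_finite_subcover (fun n : ℕ => f ⁻¹' Set.Ioi (-(n : ℝ)))
    (fun n => hf.isOpen_preimage _) (by
      intro x _
      obtain ⟨n, hn⟩ := exists_nat_gt (-f x)
      exact Set.mem_iUnion.2 ⟨n, by simp only [Set.mem_preimage, Set.mem_Ioi]; linarith⟩)
  refine ⟨-((t.sup id : ℕ) : ℝ), fun x hx => ?_⟩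
  obtain ⟨n, hn, hx'⟩ := Set.mem_iUnion₂.1 (ht hx)
  have h1 : ((n : ℕ) : ℝ) ≤ ((t.sup id : ℕ) : ℝ) := by
    exact_mod_cast Finset.le_sup (f := id) hn
  have hx'' : -(n : ℝ) < f x := hx'
  linarith

/-- If `φ : ℝᵖ → ℝ` is `ρ`-strongly convex (`ρ > 0`) and lower semicontinuous,
then its Moreau envelope `e^γ(z) = inf_λ (φ(λ) + (γ/2)‖λ − z‖²)` is
`(1/γ + 1/ρ)⁻¹`-strongly convex in `z`. -/
theorem statement3 {p : ℕ} (φ : EuclideanSpace ℝ (Fin p) → ℝ) (ρ γ : ℝ)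
    (hρ : 0 < ρ) (hγ : 0 < γ)
    (hφ : StrongConvexOn Set.univ ρ φ) (hlsc : LowerSemicontinuous φ) :
    StrongConvexOn Set.univ (1 / γ + 1 / ρ)⁻¹
      (fun z : EuclideanSpace ℝ (Fin p) =>
        ⨅ l : EuclideanSpace ℝ (Fin p), (φ l + γ / 2 * ‖l - z‖ ^ 2)) := by
  classical
  set m : ℝ := (1 / γ + 1 / ρ)⁻¹ with hm_def
  have hm_pos : 0 < m := by rw [hm_def]; positivity
  have hm_mul : m * (ρ + γ) = ρ * γ := by
    rw [hm_def]; field_simp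
  -- φ is convex
  have hmod : (0 : ℝ → ℝ) ≤ fun r => ρ / 2 * r ^ 2 := fun r => by dsimp; positivity
  have hconv : ConvexOn ℝ Set.univ φ := hφ.convexOn hmod
  -- linear lower bound on φ
  obtain ⟨c, hc⟩ := lsc_bddBelow_on_compact
    (isCompact_closedBall (0 : EuclideanSpace ℝ (Fin p)) 1) hlsc
  obtain ⟨K, hK0, hKb⟩ : ∃ K : ℝ, 0 ≤ K ∧
      ∀ x : EuclideanSpace ℝ (Fin p), -(K * (‖x‖ + 1)) ≤ φ x := by
    refine ⟨|c| + |φ 0|, by positivity, fun x => ?_⟩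
    by_cases hx : ‖x‖ ≤ 1
    · have h1 := hc x (by simpa [Metric.mem_closedBall, dist_eq_norm] using hx)
      nlinarith [norm_nonneg x, abs_nonneg (φ 0), neg_abs_le c,
        mul_nonneg (abs_nonneg c) (norm_nonneg x),
        mul_nonneg (abs_nonneg (φ 0)) (norm_nonneg x)]
    · push_neg at hx
      have ht0 : (0 : ℝ) < ‖x‖ := by linarith
      have ha' : (0:ℝ) ≤ 1 - ‖x‖⁻¹ := by
        rw [sub_nonneg]; exact inv_le_one_of_one_le₀ hx.le
      have hb' : (0:ℝ) ≤ ‖x‖⁻¹ := by positivity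
      have hab' : (1 - ‖x‖⁻¹) + ‖x‖⁻¹ = 1 := by ring
      have hcomb := hconv.2 (Set.mem_univ (0 : EuclideanSpace ℝ (Fin p))) (Set.mem_univ x)
        ha' hb' hab'
      rw [smul_zero, zero_add, smul_eq_mul, smul_eq_mul] at hcomb
      have hd : ‖x‖⁻¹ • x ∈ Metric.closedBall (0 : EuclideanSpace ℝ (Fin p)) 1 := by
        simp [Metric.mem_closedBall, dist_eq_norm, norm_smul, abs_of_pos (inv_pos.2 ht0),
          inv_mul_cancel₀ ht0.ne']
      have h1 := hc _ hd
      have h2 : ‖x‖ * c ≤ (‖x‖ - 1) * φ 0 + φ x := by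
        have h3 : ‖x‖ * (φ (‖x‖⁻¹ • x)) ≤ ‖x‖ * ((1 - ‖x‖⁻¹) * φ 0 + ‖x‖⁻¹ * φ x) :=
          mul_le_mul_of_nonneg_left hcomb ht0.le
        have h4 : ‖x‖ * ((1 - ‖x‖⁻¹) * φ 0 + ‖x‖⁻¹ * φ x) = (‖x‖ - 1) * φ 0 + φ x := by
          field_simp
        nlinarith [mul_le_mul_of_nonneg_left h1 ht0.le]
      nlinarith [neg_abs_le c, neg_abs_le (φ 0), le_abs_self (φ 0), abs_nonneg c,
        abs_nonneg (φ 0), ht0]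
  -- the infimand is bounded below for each z
  have hbdd : ∀ z : EuclideanSpace ℝ (Fin p),
      BddBelow (Set.range fun l : EuclideanSpace ℝ (Fin p) => φ l + γ / 2 * ‖l - z‖ ^ 2) := by
    intro z
    refine ⟨-(K * (‖z‖ + 1)) - K ^ 2 / (2 * γ), ?_⟩
    rintro _ ⟨l, rfl⟩
    have h1 := hKb l
    have h2 : ‖l‖ ≤ ‖l - z‖ + ‖z‖ := by
      simpa using norm_add_le (l - z) z
    have h3 : 0 ≤ γ / 2 * ‖l - z‖ ^ 2 - K * ‖l - z‖ + K ^ 2 / (2 * γ) := by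
      have he : γ / 2 * ‖l - z‖ ^ 2 - K * ‖l - z‖ + K ^ 2 / (2 * γ)
          = (γ * ‖l - z‖ - K) ^ 2 / (2 * γ) := by field_simp; ring
      rw [he]; positivity
    have h5 : 0 ≤ K * ‖l - z‖ := mul_nonneg hK0 (norm_nonneg _)
    nlinarith [norm_nonneg (l - z), norm_nonneg z, mul_le_mul_of_nonneg_left h2 hK0]
  constructor
  · exact convex_univ
  intro z₁ _ z₂ _ a b ha hb hab
  simp only [smul_eq_mul]
  refine le_of_forall_pos_le_add (fun ε hε => ?_)
  set e : EuclideanSpace ℝ (Fin p) → ℝ :=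
    fun z => ⨅ l : EuclideanSpace ℝ (Fin p), (φ l + γ / 2 * ‖l - z‖ ^ 2) with he_def
  obtain ⟨l₁, hl₁⟩ := exists_lt_of_ciInf_lt
    (show (⨅ l : EuclideanSpace ℝ (Fin p), (φ l + γ / 2 * ‖l - z₁‖ ^ 2)) < e z₁ + ε by
      rw [he_def]; linarith)
  obtain ⟨l₂, hl₂⟩ := exists_lt_of_ciInf_lt
    (show (⨅ l : EuclideanSpace ℝ (Fin p), (φ l + γ / 2 * ‖l - z₂‖ ^ 2)) < e z₂ + ε by
      rw [he_def]; linarith)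
  have hub : e (a • z₁ + b • z₂) ≤ φ (a • l₁ + b • l₂)
      + γ / 2 * ‖(a • l₁ + b • l₂) - (a • z₁ + b • z₂)‖ ^ 2 :=
    ciInf_le (hbdd _) (a • l₁ + b • l₂)
  have hsub : (a • l₁ + b • l₂) - (a • z₁ + b • z₂) = a • (l₁ - z₁) + b • (l₂ - z₂) := by
    module
  have hid : ∀ x y : EuclideanSpace ℝ (Fin p),
      ‖a • x + b • y‖ ^ 2 = a * ‖x‖ ^ 2 + b * ‖y‖ ^ 2 - a * b * ‖x - y‖ ^ 2 := by
    intro x y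
    have h1 : ‖a • x + b • y‖ ^ 2
        = ‖a • x‖ ^ 2 + 2 * inner ℝ (a • x) (b • y) + ‖b • y‖ ^ 2 := norm_add_sq_real _ _
    have h2 : ‖x - y‖ ^ 2 = ‖x‖ ^ 2 - 2 * inner ℝ x y + ‖y‖ ^ 2 := norm_sub_sq_real x y
    have h3 : (inner ℝ (a • x) (b • y) : ℝ) = a * b * inner ℝ x y := by
      rw [real_inner_smul_left, real_inner_smul_right]; ring
    have h4 : ‖a • x‖ = a * ‖x‖ := by rw [norm_smul, Real.norm_eq_abs, abs_of_nonneg ha]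
    have h5 : ‖b • y‖ = b * ‖y‖ := by rw [norm_smul, Real.norm_eq_abs, abs_of_nonneg hb]
    rw [h1, h2, h3, h4, h5]
    linear_combination (a * ‖x‖ ^ 2 + b * ‖y‖ ^ 2) * hab
  have hnorm : ‖(a • l₁ + b • l₂) - (a • z₁ + b • z₂)‖ ^ 2
      = a * ‖l₁ - z₁‖ ^ 2 + b * ‖l₂ - z₂‖ ^ 2 - a * b * ‖(l₁ - z₁) - (l₂ - z₂)‖ ^ 2 := by
    rw [hsub]; exact hid _ _
  have hsc : φ (a • l₁ + b • l₂)
      ≤ a * φ l₁ + b * φ l₂ - a * b * (ρ / 2 * ‖l₁ - l₂‖ ^ 2) := by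
    have := hφ.2 (Set.mem_univ l₁) (Set.mem_univ l₂) ha hb hab
    simpa using this
  -- key scalar inequality
  have hkey : m * ‖z₁ - z₂‖ ^ 2 ≤ ρ * ‖l₁ - l₂‖ ^ 2 + γ * ‖(l₁ - z₁) - (l₂ - z₂)‖ ^ 2 := by
    have hw : (l₁ - z₁) - (l₂ - z₂) = (l₁ - l₂) - (z₁ - z₂) := by module
    rw [hw]
    have htri : ‖z₁ - z₂‖ ≤ ‖l₁ - l₂‖ + ‖(l₁ - l₂) - (z₁ - z₂)‖ := by
      have hv : z₁ - z₂ = (l₁ - l₂) - ((l₁ - l₂) - (z₁ - z₂)) := by module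
      calc ‖z₁ - z₂‖ = ‖(l₁ - l₂) - ((l₁ - l₂) - (z₁ - z₂))‖ := by rw [← hv]
        _ ≤ _ := norm_sub_le _ _
    exact scalar_key hρ hγ hm_mul (norm_nonneg _) (norm_nonneg _) (norm_nonneg _) htri
  -- combine everything
  have ha1 : a * (φ l₁ + γ / 2 * ‖l₁ - z₁‖ ^ 2) ≤ a * (e z₁ + ε) :=
    mul_le_mul_of_nonneg_left hl₁.le ha
  have hb1 : b * (φ l₂ + γ / 2 * ‖l₂ - z₂‖ ^ 2) ≤ b * (e z₂ + ε) :=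
    mul_le_mul_of_nonneg_left hl₂.le hb
  have hk2 : a * b * (m / 2 * ‖z₁ - z₂‖ ^ 2)
      ≤ a * b * (ρ / 2 * ‖l₁ - l₂‖ ^ 2 + γ / 2 * ‖(l₁ - z₁) - (l₂ - z₂)‖ ^ 2) := by
    apply mul_le_mul_of_nonneg_left _ (mul_nonneg ha hb)
    linarith
  have habe : a * ε + b * ε = ε := by rw [← add_mul, hab, one_mul]
  have hgoal : e (a • z₁ + b • z₂)
      ≤ a * e z₁ + b * e z₂ - a * b * (m / 2 * ‖z₁ - z₂‖ ^ 2) + ε := by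
    rw [hnorm] at hub
    nlinarith [hub, hsc, ha1, hb1, hk2, habe]
  exact hgoal
end

section
/- Consider scalar recursions where λ⁰ = 0 and for each j ≥ 0, λ^{j+1} ≤ (1 − ργ₂/(j+1)) λ^j + (ρ/(j+1))(γ₂ a + b) with λ^j ≥ 0, ρ γ₂ ≥ 1, a, b ≥ 0. Then λ^j ≤ ρ(γ₂ a + b) for all j ≥ 1. -/
/-- Scalar recursion: if `λ⁰ = 0`, `λʲ ≥ 0`, `ργ₂ ≥ 1`, `a, b ≥ 0`, and
`λ^{j+1} ≤ (1 − ργ₂/(j+1)) λ^j + (ρ/(j+1))(γ₂ a + b)` for all `j ≥ 0`, then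
`λ^j ≤ ρ(γ₂ a + b)` for all `j ≥ 1`. -/
theorem statement9 (ρ γ₂ a b : ℝ) (hρ : 0 < ρ) (hγ₂ : 0 < γ₂) (h1 : 1 ≤ ρ * γ₂)
    (ha : 0 ≤ a) (hb : 0 ≤ b)
    (lam : ℕ → ℝ) (hnn : ∀ j, 0 ≤ lam j) (h0 : lam 0 = 0)
    (hrec : ∀ j : ℕ,
      lam (j + 1) ≤ (1 - ρ * γ₂ / ((j : ℝ) + 1)) * lam j + ρ / ((j : ℝ) + 1) * (γ₂ * a + b)) :
    ∀ j : ℕ, 1 ≤ j → lam j ≤ ρ * (γ₂ * a + b) := by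
  have hM : 0 ≤ γ₂ * a + b := by positivity
  intro j hj
  induction j with
  | zero => omega
  | succ n ih =>
    have hrecn := hrec n
    have hn1 : (0:ℝ) < (n : ℝ) + 1 := by positivity
    rcases Nat.eq_zero_or_pos n with hn | hn
    · subst hn
      simp [h0] at hrecn
      linarith
    · have ihn := ih hn
      have hfrac : ρ / ((n:ℝ) + 1) * (γ₂ * a + b) ≤ ρ * γ₂ / ((n:ℝ)+1) * (ρ * (γ₂ * a + b)) := by
        rw [div_mul_eq_mul_div, div_mul_eq_mul_div]
        apply div_le_div_of_nonneg_right _ hn1.le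
        nlinarith [mul_le_mul_of_nonneg_right h1 (mul_nonneg hρ.le hM)]
      rcases le_or_gt (1 - ρ * γ₂ / ((n:ℝ)+1)) 0 with hc | hc
      · have : (1 - ρ * γ₂ / ((n:ℝ)+1)) * lam n ≤ 0 := mul_nonpos_of_nonpos_of_nonneg hc (hnn n)
        have hle : ρ / ((n:ℝ) + 1) ≤ ρ := by
          rw [div_le_iff₀ hn1]; nlinarith
        have := mul_le_mul_of_nonneg_right hle hM
        linarith
      · have := mul_le_mul_of_nonneg_left ihn (le_of_lt hc)
        have hfin : (1 - ρ * γ₂ / ((n:ℝ)+1)) * (ρ * (γ₂ * a + b)) + ρ / ((n:ℝ)+1) * (γ₂ * a + b)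
            ≤ ρ * (γ₂ * a + b) := by nlinarith
        linarith
end

section
/- Projected (stochastic) gradient descent one-step decrease for strongly convex functions: let Y be convex closed, f : ℝⁿ → ℝ μ-strongly convex and differentiable, w⁺ = Proj_Y(w − η g) for some vector g, then for all u ∈ Y: ⟨g, w⁺ − u⟩ ≤ −(1/η)⟨w⁺ − w, w⁺ − u⟩, and consequently f(w) − f(u) + (1/(2η))‖w⁺ − u‖² ≤ (1/2)(1/η − μ)‖w − u‖² + (η/2)‖g‖² + ⟨∇f(w) − g, w − u⟩. -/
open scoped RealInnerProductSpace

/-- Gradient inequality for strongly convex differentiable functions. -/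
lemma strongConvex_gradient_ineq {n : ℕ} {μ : ℝ}
    {f : EuclideanSpace ℝ (Fin n) → ℝ}
    (hf : StrongConvexOn Set.univ μ f) (hfdiff : Differentiable ℝ f)
    (w u : EuclideanSpace ℝ (Fin n)) :
    f w + ⟪gradient f w, u - w⟫ + μ / 2 * ‖u - w‖ ^ 2 ≤ f u := by
  set v := u - w with hv
  have hconv : ConvexOn ℝ Set.univ (fun x => f x - μ / 2 * ‖x‖ ^ 2) :=
    strongConvexOn_iff_convex.mp hf
  set q : ℝ → ℝ := fun t => f (w + t • v) - μ / 2 * ‖w + t • v‖ ^ 2 with hq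
  -- q is convex
  have hqconv : ConvexOn ℝ Set.univ q := by
    have h := hconv.comp_affineMap (AffineMap.lineMap w (w + v) : ℝ →ᵃ[ℝ] _)
    have heq : ((fun x => f x - μ / 2 * ‖x‖ ^ 2) ∘ (AffineMap.lineMap w (w + v))) = q := by
      funext t
      simp [Function.comp, AffineMap.lineMap_apply, hq, add_comm]
    rw [heq] at h
    simpa using h
  -- derivative of the line
  have hline : HasDerivAt (fun t : ℝ => w + t • v) v 0 := by
    simpa using ((hasDerivAt_id (0 : ℝ)).smul_const v).const_add w
  -- derivative of first part
  have h1 : HasDerivAt (fun t : ℝ => f (w + t • v)) ⟪gradient f w, v⟫ 0 := by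
    have hg : HasGradientAt f (gradient f w) w := (hfdiff w).hasGradientAt
    have hF := hasGradientAt_iff_hasFDerivAt.mp hg
    have hF' : HasFDerivAt f ((InnerProductSpace.toDual ℝ _) (gradient f w)) (w + (0 : ℝ) • v) := by
      simpa using hF
    have := hF'.comp_hasDerivAt 0 hline
    simp [InnerProductSpace.toDual_apply_apply] at this ⊢
    exact this
  -- derivative of second part
  have hfun : (fun t : ℝ => μ / 2 * ‖w + t • v‖ ^ 2)
      = fun t => μ / 2 * ‖w‖ ^ 2 + (μ * ⟪w, v⟫) * t + (μ / 2 * ‖v‖ ^ 2) * t ^ 2 := by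
    funext t
    rw [norm_add_sq_real, real_inner_smul_right, norm_smul, mul_pow]
    simp only [Real.norm_eq_abs, sq_abs]
    ring
  have h2 : HasDerivAt (fun t : ℝ => μ / 2 * ‖w + t • v‖ ^ 2) (μ * ⟪w, v⟫) 0 := by
    rw [hfun]
    have ha : HasDerivAt (fun t : ℝ => μ / 2 * ‖w‖ ^ 2 + (μ * ⟪w, v⟫) * t)
        (μ * ⟪w, v⟫) 0 := by
      simpa using ((hasDerivAt_id (0 : ℝ)).const_mul (μ * ⟪w, v⟫)).const_add (μ / 2 * ‖w‖ ^ 2)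
    have hb : HasDerivAt (fun t : ℝ => (μ / 2 * ‖v‖ ^ 2) * t ^ 2) 0 0 := by
      simpa using (hasDerivAt_pow 2 (0 : ℝ)).const_mul (μ / 2 * ‖v‖ ^ 2)
    have hab := ha.add hb
    simp only [add_zero] at hab
    exact hab
  have hqd : HasDerivAt q (⟪gradient f w, v⟫ - μ * ⟪w, v⟫) 0 := h1.sub h2
  have hslope := hqconv.le_slope_of_hasDerivAt (Set.mem_univ (0 : ℝ))
    (Set.mem_univ (1 : ℝ)) zero_lt_one hqd
  have hslope' : ⟪gradient f w, v⟫ - μ * ⟪w, v⟫ ≤ q 1 - q 0 := by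
    simpa [slope_def_field] using hslope
  have hq0 : q 0 = f w - μ / 2 * ‖w‖ ^ 2 := by simp [hq]
  have hq1 : q 1 = f u - μ / 2 * ‖u‖ ^ 2 := by
    simp [hq, hv]
  have hu2 : ‖u‖ ^ 2 = ‖w‖ ^ 2 + 2 * ⟪w, v⟫ + ‖v‖ ^ 2 := by
    have : u = w + v := by rw [hv]; abel
    rw [this, norm_add_sq_real]
  rw [hq0, hq1] at hslope'
  have hu2' : μ / 2 * ‖u‖ ^ 2 = μ / 2 * ‖w‖ ^ 2 + μ * ⟪w, v⟫ + μ / 2 * ‖v‖ ^ 2 := by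
    rw [hu2]; ring
  linarith

/-- Projected (stochastic) gradient descent one-step decrease for strongly
convex functions: `Y` closed convex, `f` `μ`-strongly convex differentiable,
`w⁺ = Proj_Y(w − η g)` (characterized by the variational inequality), then for all `u ∈ Y`:
`⟨g, w⁺ − u⟩ ≤ −(1/η)⟨w⁺ − w, w⁺ − u⟩`, and consequently
`f(w) − f(u) + (1/(2η))‖w⁺ − u‖² ≤ (1/2)(1/η − μ)‖w − u‖² + (η/2)‖g‖² + ⟨∇f(w) − g, w − u⟩`. -/
theorem statement11 {n : ℕ} (μ η : ℝ) (hμ : 0 < μ) (hη : 0 < η)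
    (Y : Set (EuclideanSpace ℝ (Fin n)))
    (hYne : Y.Nonempty) (hYclosed : IsClosed Y) (hYconv : Convex ℝ Y)
    (f : EuclideanSpace ℝ (Fin n) → ℝ)
    (hf : StrongConvexOn Set.univ μ f) (hfdiff : Differentiable ℝ f)
    (w : EuclideanSpace ℝ (Fin n)) (hw : w ∈ Y)
    (g : EuclideanSpace ℝ (Fin n))
    (wplus : EuclideanSpace ℝ (Fin n)) (hwplus : wplus ∈ Y)
    (hproj : ∀ u ∈ Y, ⟪(w - η • g) - wplus, u - wplus⟫ ≤ 0) :
    ∀ u ∈ Y,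
      ⟪g, wplus - u⟫ ≤ -(1 / η) * ⟪wplus - w, wplus - u⟫ ∧
      f w - f u + 1 / (2 * η) * ‖wplus - u‖ ^ 2 ≤
        1 / 2 * (1 / η - μ) * ‖w - u‖ ^ 2 + η / 2 * ‖g‖ ^ 2 +
          ⟪gradient f w - g, w - u⟫ := by
  intro u hu
  -- the variational inequality, rearranged
  have h1 : ⟪wplus - w, wplus - u⟫ + η * ⟪g, wplus - u⟫ ≤ 0 := by
    have h := hproj u hu
    have e1 : (w - η • g) - wplus = -((wplus - w) + η • g) := by abel
    have e2 : u - wplus = -(wplus - u) := by abel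
    rw [e1, e2, inner_neg_neg, inner_add_left, real_inner_smul_left] at h
    linarith
  have hpart1 : ⟪g, wplus - u⟫ ≤ -(1 / η) * ⟪wplus - w, wplus - u⟫ := by
    rw [show -(1 / η) * ⟪wplus - w, wplus - u⟫ = (-⟪wplus - w, wplus - u⟫) / η by ring,
      le_div_iff₀ hη]
    linarith
  refine ⟨hpart1, ?_⟩
  -- strong convexity gradient inequality at (w, u)
  have hsc := strongConvex_gradient_ineq hf hfdiff w u
  -- rewrite gradient inner products
  have e3 : ⟪gradient f w, u - w⟫ = -⟪gradient f w, w - u⟫ := by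
    rw [show u - w = -(w - u) by abel, inner_neg_right]
  have e4 : ⟪gradient f w, w - u⟫ = ⟪gradient f w - g, w - u⟫ + ⟪g, w - u⟫ := by
    rw [inner_sub_left]; ring
  have e5 : ⟪g, w - u⟫ = ⟪g, w - wplus⟫ + ⟪g, wplus - u⟫ := by
    rw [← inner_add_right]; congr 1; abel
  -- norm identity
  have e6 : 2 * ⟪wplus - w, wplus - u⟫ = ‖wplus - w‖ ^ 2 + ‖wplus - u‖ ^ 2 - ‖w - u‖ ^ 2 := by
    have := norm_sub_sq_real (wplus - w) (wplus - u)
    have e : (wplus - w) - (wplus - u) = -(w - u) := by abel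
    rw [e, norm_neg] at this
    linarith
  -- Young's inequality
  have e7 : 2 * η * ⟪g, w - wplus⟫ ≤ η ^ 2 * ‖g‖ ^ 2 + ‖w - wplus‖ ^ 2 := by
    have h0 : (0 : ℝ) ≤ ‖η • g - (w - wplus)‖ ^ 2 := sq_nonneg _
    rw [norm_sub_sq_real, real_inner_smul_left, norm_smul, mul_pow] at h0
    simp only [Real.norm_eq_abs, sq_abs] at h0
    linarith
  have e8 : ‖w - wplus‖ = ‖wplus - w‖ := by rw [← norm_neg]; congr 1; abel
  have hμ1 : ‖u - w‖ = ‖w - u‖ := by rw [← norm_neg]; congr 1; abel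
  rw [e3, e4, e5, hμ1] at hsc
  -- combine everything, multiplied through by 2η
  have goal2 : 2 * η * (f w - f u) + ‖wplus - u‖ ^ 2 ≤
      (1 - η * μ) * ‖w - u‖ ^ 2 + η ^ 2 * ‖g‖ ^ 2 +
        2 * η * ⟪gradient f w - g, w - u⟫ := by
    have hsc2 := mul_le_mul_of_nonneg_left hsc (by positivity : (0 : ℝ) ≤ 2 * η)
    have h1' := mul_le_mul_of_nonneg_left h1 (by norm_num : (0 : ℝ) ≤ 2)
    rw [e8] at e7
    nlinarith [hsc2, h1', e6, e7, hμ.le, hη.le]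
  have h2η : (0 : ℝ) < 2 * η := by positivity
  have key : f w - f u + 1 / (2 * η) * ‖wplus - u‖ ^ 2 -
      (1 / 2 * (1 / η - μ) * ‖w - u‖ ^ 2 + η / 2 * ‖g‖ ^ 2 + ⟪gradient f w - g, w - u⟫)
      = (2 * η * (f w - f u) + ‖wplus - u‖ ^ 2 -
          ((1 - η * μ) * ‖w - u‖ ^ 2 + η ^ 2 * ‖g‖ ^ 2 +
            2 * η * ⟪gradient f w - g, w - u⟫)) / (2 * η) := by
    field_simp
  have hnum : (2 * η * (f w - f u) + ‖wplus - u‖ ^ 2 -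
      ((1 - η * μ) * ‖w - u‖ ^ 2 + η ^ 2 * ‖g‖ ^ 2 +
        2 * η * ⟪gradient f w - g, w - u⟫)) / (2 * η) ≤ 0 :=
    div_nonpos_of_nonpos_of_nonneg (by linarith) h2η.le
  rw [← sub_nonpos, key]
  exact hnum
end

section
/- Partial penalty exactness (deterministic): suppose F is L_F-Lipschitz in y, G(x,·) has (μ/2)-quadratic growth around y*(x) on the feasible region in the relaxed sense G(x,y) − v(x) ≥ (μ/2)‖y − y*(x)‖² − √2 B ε₂ whenever (1/2)Σᵢ[Hᵢ(x,y)]₊² ≤ ε₂². Then for the penalized objective Φ_c(x,y) = F(x,y) + c (G(x,y) − v(x)), one has Φ_c(x,y) − F(x, y*(x)) ≥ −L_F²/(2 c μ) − c √2 B ε₂ for all (x,y) with (1/2)Σᵢ[Hᵢ(x,y)]₊² ≤ ε₂². -/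
/-- Partial penalty exactness (deterministic): suppose `F` is `L_F`-Lipschitz in
`y`, and the relaxed quadratic growth `G(x,y) − v(x) ≥ (μ/2)‖y − y*(x)‖² − √2 B ε₂` holds
whenever `(1/2)Σᵢ[Hᵢ(x,y)]₊² ≤ ε₂²`. Then for `Φ_c(x,y) = F(x,y) + c(G(x,y) − v(x))`,
`Φ_c(x,y) − F(x, y*(x)) ≥ −L_F²/(2cμ) − c√2 B ε₂` for all `(x,y)` with
`(1/2)Σᵢ[Hᵢ(x,y)]₊² ≤ ε₂²`. -/
theorem statement14 {m n p : ℕ} (μ LF B c ε₂ : ℝ)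
    (hμ : 0 < μ) (hLF : 0 ≤ LF) (hB : 0 < B) (hc : 0 < c) (hε₂ : 0 ≤ ε₂)
    (F G : EuclideanSpace ℝ (Fin m) → EuclideanSpace ℝ (Fin n) → ℝ)
    (H : EuclideanSpace ℝ (Fin m) → EuclideanSpace ℝ (Fin n) → Fin p → ℝ)
    (v : EuclideanSpace ℝ (Fin m) → ℝ)
    (ystar : EuclideanSpace ℝ (Fin m) → EuclideanSpace ℝ (Fin n))
    (hFLip : ∀ x y₁ y₂, |F x y₁ - F x y₂| ≤ LF * ‖y₁ - y₂‖)
    (hgrowth : ∀ x y, (1 / 2) * ∑ i, (max (H x y i) 0) ^ 2 ≤ ε₂ ^ 2 →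
      G x y - v x ≥ μ / 2 * ‖y - ystar x‖ ^ 2 - Real.sqrt 2 * B * ε₂) :
    ∀ x y, (1 / 2) * ∑ i, (max (H x y i) 0) ^ 2 ≤ ε₂ ^ 2 →
      F x y + c * (G x y - v x) - F x (ystar x) ≥
        -(LF ^ 2 / (2 * c * μ)) - c * Real.sqrt 2 * B * ε₂ := by
  intro x y hfeas
  have hg := hgrowth x y hfeas
  have hF := (abs_le.mp (hFLip x y (ystar x))).1
  set t := ‖y - ystar x‖ with ht
  have htn : 0 ≤ t := norm_nonneg _
  have hcμ : (0:ℝ) < 2 * c * μ := by positivity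
  have key : -(LF ^ 2 / (2 * c * μ)) ≤ c * (μ / 2) * t ^ 2 - LF * t := by
    rw [neg_le, le_div_iff₀ hcμ]
    nlinarith [sq_nonneg (c * μ * t - LF)]
  nlinarith [mul_le_mul_of_nonneg_left hg (le_of_lt hc)]
end

section
/- Exactness of the full penalty: under the bound G(x,y) − v(x) ≥ (μ/2)‖y − y*(x)‖² − ⟨λ*(x), H(x,y)⟩ with ‖λ*(x)‖ ≤ B, and F L_F-Lipschitz in y, the penalized function Φ(x,y) = F(x,y) + c₁(G(x,y) − v(x)) + (c₂/2)Σᵢ[Hᵢ(x,y)]₊² satisfies Φ(x,y) − F(x, y*(x)) ≥ −L_F²/(2 c₁ μ) − c₁² B²/(2 c₂) for all (x,y) ∈ X × Y. -/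
/-- Exactness of the full penalty: under the bound
`G(x,y) − v(x) ≥ (μ/2)‖y − y*(x)‖² − ⟨λ*(x), H(x,y)⟩` with `λ*(x) ≥ 0`, `‖λ*(x)‖ ≤ B`, and
`F` `L_F`-Lipschitz in `y`, the penalized function
`Φ(x,y) = F(x,y) + c₁(G(x,y) − v(x)) + (c₂/2)Σᵢ[Hᵢ(x,y)]₊²` satisfies
`Φ(x,y) − F(x, y*(x)) ≥ −L_F²/(2c₁μ) − c₁²B²/(2c₂)` for all `(x,y)`. -/
theorem statement15 {m n p : ℕ} (μ LF B c₁ c₂ : ℝ)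
    (hμ : 0 < μ) (hLF : 0 ≤ LF) (hB : 0 < B) (hc₁ : 0 < c₁) (hc₂ : 0 < c₂)
    (F G : EuclideanSpace ℝ (Fin m) → EuclideanSpace ℝ (Fin n) → ℝ)
    (H : EuclideanSpace ℝ (Fin m) → EuclideanSpace ℝ (Fin n) → Fin p → ℝ)
    (v : EuclideanSpace ℝ (Fin m) → ℝ)
    (ystar : EuclideanSpace ℝ (Fin m) → EuclideanSpace ℝ (Fin n))
    (lamstar : EuclideanSpace ℝ (Fin m) → EuclideanSpace ℝ (Fin p))
    (hlamnn : ∀ x i, 0 ≤ lamstar x i) (hlamB : ∀ x, ‖lamstar x‖ ≤ B)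
    (hFLip : ∀ x y₁ y₂, |F x y₁ - F x y₂| ≤ LF * ‖y₁ - y₂‖)
    (hgrowth : ∀ x y,
      G x y - v x ≥ μ / 2 * ‖y - ystar x‖ ^ 2 - ∑ i, lamstar x i * H x y i) :
    ∀ x y,
      (F x y + c₁ * (G x y - v x) + c₂ / 2 * ∑ i, (max (H x y i) 0) ^ 2) - F x (ystar x) ≥
        -(LF ^ 2 / (2 * c₁ * μ)) - c₁ ^ 2 * B ^ 2 / (2 * c₂) := by
  intro x y
  set t := ‖y - ystar x‖ with ht
  have ht0 : 0 ≤ t := norm_nonneg _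
  have h1 : F x y - F x (ystar x) ≥ -(LF * t) := by
    have h := (abs_le.mp (hFLip x y (ystar x))).1
    linarith
  have h2 := hgrowth x y
  -- pointwise Young inequality for the constraint terms
  have hpt : ∀ i ∈ Finset.univ (α := Fin p),
      -(c₁ ^ 2 * (lamstar x i) ^ 2 / (2 * c₂)) ≤
        -(c₁ * (lamstar x i * H x y i)) + c₂ / 2 * (max (H x y i) 0) ^ 2 := by
    intro i _
    have hl := hlamnn x i
    have hmax : lamstar x i * H x y i ≤ lamstar x i * max (H x y i) 0 :=
      mul_le_mul_of_nonneg_left (le_max_left _ _) hl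
    have h2c2 : (0:ℝ) < 2 * c₂ := by positivity
    have key2 : -(c₁ ^ 2 * (lamstar x i) ^ 2) ≤
        (-(c₁ * (lamstar x i * max (H x y i) 0)) + c₂ / 2 * (max (H x y i) 0) ^ 2) * (2 * c₂) := by
      nlinarith [sq_nonneg (c₂ * max (H x y i) 0 - c₁ * lamstar x i)]
    have key : -(c₁ ^ 2 * (lamstar x i) ^ 2) / (2 * c₂) ≤
        -(c₁ * (lamstar x i * max (H x y i) 0)) + c₂ / 2 * (max (H x y i) 0) ^ 2 :=
      (div_le_iff₀ h2c2).mpr key2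
    rw [neg_div] at key
    nlinarith
  have hsum := Finset.sum_le_sum hpt
  have hnormsq : ∑ i, (lamstar x i) ^ 2 ≤ B ^ 2 := by
    have h := hlamB x
    have he : ‖lamstar x‖ ^ 2 = ∑ i, (lamstar x i) ^ 2 := by
      rw [EuclideanSpace.norm_eq, Real.sq_sqrt (by positivity)]
      simp [sq_abs]
    nlinarith [norm_nonneg (lamstar x)]
  have hsum' : -(c₁ * ∑ i, lamstar x i * H x y i) + c₂ / 2 * ∑ i, (max (H x y i) 0) ^ 2 ≥
      -(c₁ ^ 2 * B ^ 2 / (2 * c₂)) := by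
    have e1 : ∑ i, (-(c₁ * (lamstar x i * H x y i)) + c₂ / 2 * (max (H x y i) 0) ^ 2)
        = -(c₁ * ∑ i, lamstar x i * H x y i) + c₂ / 2 * ∑ i, (max (H x y i) 0) ^ 2 := by
      rw [Finset.sum_add_distrib, Finset.sum_neg_distrib, ← Finset.mul_sum, ← Finset.mul_sum]
    have e2 : ∑ i, -(c₁ ^ 2 * (lamstar x i) ^ 2 / (2 * c₂))
        = -(c₁ ^ 2 * (∑ i, (lamstar x i) ^ 2) / (2 * c₂)) := by
      rw [Finset.sum_neg_distrib]
      congr 1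
      rw [← Finset.sum_div, ← Finset.mul_sum]
    rw [e1, e2] at hsum
    have hmono : c₁ ^ 2 * (∑ i, (lamstar x i) ^ 2) / (2 * c₂) ≤ c₁ ^ 2 * B ^ 2 / (2 * c₂) := by
      gcongr
    linarith
  have hyoung : -(LF * t) + c₁ * (μ / 2 * t ^ 2) ≥ -(LF ^ 2 / (2 * c₁ * μ)) := by
    have h2c : (0:ℝ) < 2 * c₁ * μ := by positivity
    rw [ge_iff_le, neg_le, le_div_iff₀ h2c]
    nlinarith [sq_nonneg (c₁ * μ * t - LF)]
  nlinarith [mul_le_mul_of_nonneg_left h2 (le_of_lt hc₁)]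
end

section
/- A biased projected SGD descent estimate: suppose Ψ : ℝᵈ → ℝ has L-Lipschitz gradient, u^{k+1} = Proj_U(u^k − α d^k) with U closed convex, α ≤ 1/(2L), and d^k = ∇Ψ(u^k) + b^k. Then Ψ(u^{k+1}) − Ψ(u^k) ≤ −(1/(4α))‖u^{k+1} − u^k‖² + (α/2)‖b^k‖². -/
open scoped RealInnerProductSpace

set_option maxHeartbeats 1000000 in
lemma descent_aux {d : ℕ} (L : ℝ) (hL : 0 < L) (Ψ : EuclideanSpace ℝ (Fin d) → ℝ)
    (hΨdiff : Differentiable ℝ Ψ)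
    (hΨLip : ∀ a b, ‖gradient Ψ a - gradient Ψ b‖ ≤ L * ‖a - b‖)
    (x y : EuclideanSpace ℝ (Fin d)) :
    Ψ y ≤ Ψ x + ⟪gradient Ψ x, y - x⟫ + L / 2 * ‖y - x‖ ^ 2 := by
  set v := y - x with hv
  have hgradcont : Continuous (gradient Ψ) := by
    have : LipschitzWith (Real.toNNReal L) (gradient Ψ) := by
      apply LipschitzWith.of_dist_le_mul
      intro a b
      rw [dist_eq_norm, dist_eq_norm]
      calc ‖gradient Ψ a - gradient Ψ b‖ ≤ L * ‖a - b‖ := hΨLip a b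
        _ = (Real.toNNReal L : ℝ) * ‖a - b‖ := by rw [Real.coe_toNNReal _ hL.le]
    exact this.continuous
  set φ : ℝ → ℝ := fun t => ⟪gradient Ψ (x + t • v), v⟫ with hφ
  have hφcont : Continuous φ := by
    apply Continuous.inner
    · exact hgradcont.comp (by continuity)
    · exact continuous_const
  have hderiv : ∀ t : ℝ, HasDerivAt (fun s => Ψ (x + s • v)) (φ t) t := by
    intro t
    have h1 : HasFDerivAt Ψ (fderiv ℝ Ψ (x + t • v)) (x + t • v) :=
      (hΨdiff (x + t • v)).hasFDerivAt
    have h2 : HasDerivAt (fun s : ℝ => x + s • v) v t := by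
      simpa using ((hasDerivAt_id t).smul_const v).const_add x
    have h3 : HasDerivAt (fun s => Ψ (x + s • v)) (fderiv ℝ Ψ (x + t • v) v) t :=
      h1.comp_hasDerivAt t h2
    convert h3 using 1
    show ⟪gradient Ψ (x + t • v), v⟫ = fderiv ℝ Ψ (x + t • v) v
    rw [gradient]
    exact InnerProductSpace.toDual_symm_apply
  have hint : IntervalIntegrable φ MeasureTheory.volume 0 1 :=
    hφcont.intervalIntegrable 0 1
  have hftc : ∫ t in (0:ℝ)..1, φ t = Ψ (x + (1:ℝ) • v) - Ψ (x + (0:ℝ) • v) :=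
    intervalIntegral.integral_eq_sub_of_hasDerivAt (fun t _ => hderiv t) hint
  have hx0 : x + (0:ℝ) • v = x := by simp
  have hx1 : x + (1:ℝ) • v = y := by simp [hv]
  rw [hx0, hx1] at hftc
  have hmono : ∫ t in (0:ℝ)..1, φ t ≤ ∫ t in (0:ℝ)..1, (φ 0 + L * ‖v‖ ^ 2 * t) := by
    apply intervalIntegral.integral_mono_on zero_le_one hint
    · exact (Continuous.intervalIntegrable (by continuity) 0 1)
    · intro t ht
      have hd : φ t - φ 0 = ⟪gradient Ψ (x + t • v) - gradient Ψ (x + (0:ℝ) • v), v⟫ := by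
        rw [inner_sub_left]
      have hcs : ⟪gradient Ψ (x + t • v) - gradient Ψ (x + (0:ℝ) • v), v⟫ ≤
          ‖gradient Ψ (x + t • v) - gradient Ψ (x + (0:ℝ) • v)‖ * ‖v‖ :=
        real_inner_le_norm _ _
      have hlip := hΨLip (x + t • v) (x + (0:ℝ) • v)
      have hnorm : ‖(x + t • v) - (x + (0:ℝ) • v)‖ = t * ‖v‖ := by
        simp [norm_smul, abs_of_nonneg ht.1]
      rw [hnorm] at hlip
      have hvnn : (0:ℝ) ≤ ‖v‖ := norm_nonneg v
      nlinarith [norm_nonneg (gradient Ψ (x + t • v) - gradient Ψ (x + (0:ℝ) • v))]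
  have hcomp : ∫ t in (0:ℝ)..1, (φ 0 + L * ‖v‖ ^ 2 * t) = φ 0 + L * ‖v‖ ^ 2 / 2 := by
    rw [intervalIntegral.integral_add (intervalIntegrable_const)
      ((intervalIntegral.intervalIntegrable_id).const_mul _),
      intervalIntegral.integral_const, intervalIntegral.integral_const_mul, integral_id]
    norm_num [smul_eq_mul]
    ring
  have hφ0 : φ 0 = ⟪gradient Ψ x, y - x⟫ := by
    show ⟪gradient Ψ (x + (0:ℝ) • v), v⟫ = ⟪gradient Ψ x, y - x⟫
    rw [hx0]
  rw [hftc] at hmono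
  rw [hcomp, hφ0] at hmono
  linarith

set_option maxHeartbeats 1000000 in
/-- A biased projected SGD descent estimate: if `Ψ` has `L`-Lipschitz gradient,
`u⁺ = Proj_U(uk − α dk)` with `U` closed convex (characterized by the variational inequality),
`α ≤ 1/(2L)`, and `dk = ∇Ψ(uk) + bk`, then
`Ψ(u⁺) − Ψ(uk) ≤ −(1/(4α))‖u⁺ − uk‖² + (α/2)‖bk‖²`. -/
theorem statement16 {d : ℕ} (L α : ℝ) (hL : 0 < L) (hα : 0 < α) (hαL : α ≤ 1 / (2 * L))
    (U : Set (EuclideanSpace ℝ (Fin d)))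
    (hUne : U.Nonempty) (hUclosed : IsClosed U) (hUconv : Convex ℝ U)
    (Ψ : EuclideanSpace ℝ (Fin d) → ℝ) (hΨdiff : Differentiable ℝ Ψ)
    (hΨLip : ∀ a b, ‖gradient Ψ a - gradient Ψ b‖ ≤ L * ‖a - b‖)
    (uk bk dk uplus : EuclideanSpace ℝ (Fin d))
    (huk : uk ∈ U) (hdk : dk = gradient Ψ uk + bk)
    (huplus : uplus ∈ U)
    (hproj : ∀ w ∈ U, ⟪(uk - α • dk) - uplus, w - uplus⟫ ≤ 0) :
    Ψ uplus - Ψ uk ≤ -(1 / (4 * α)) * ‖uplus - uk‖ ^ 2 + α / 2 * ‖bk‖ ^ 2 := by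
  have hdesc := descent_aux L hL Ψ hΨdiff hΨLip uk uplus
  have h2 := hproj uk huk
  have hexp : ⟪(uk - α • dk) - uplus, uk - uplus⟫ =
      ‖uk - uplus‖ ^ 2 - α * ⟪dk, uk - uplus⟫ := by
    have h : (uk - α • dk) - uplus = (uk - uplus) - α • dk := by abel
    rw [h, inner_sub_left, real_inner_smul_left, real_inner_self_eq_norm_sq]
  rw [hexp] at h2
  have hnormrev : ‖uplus - uk‖ = ‖uk - uplus‖ := norm_sub_rev _ _
  have hgs : ⟪gradient Ψ uk, uplus - uk⟫ = -⟪dk, uk - uplus⟫ - ⟪bk, uplus - uk⟫ := by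
    have e1 : ⟪dk, uk - uplus⟫ = ⟪gradient Ψ uk, uk - uplus⟫ + ⟪bk, uk - uplus⟫ := by
      rw [hdk, inner_add_left]
    have e2 : ⟪gradient Ψ uk, uk - uplus⟫ = -⟪gradient Ψ uk, uplus - uk⟫ := by
      rw [show uk - uplus = -(uplus - uk) by abel, inner_neg_right]
    have e3 : ⟪bk, uk - uplus⟫ = -⟪bk, uplus - uk⟫ := by
      rw [show uk - uplus = -(uplus - uk) by abel, inner_neg_right]
    linarith
  have hcs : -(‖bk‖ * ‖uplus - uk‖) ≤ ⟪bk, uplus - uk⟫ := by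
    have := real_inner_le_norm bk (uk - uplus)
    rw [show uk - uplus = -(uplus - uk) by abel, inner_neg_right, norm_neg] at this
    linarith
  have hL2' : L * (2 * α) ≤ 1 := by
    rw [le_div_iff₀ (by positivity)] at hαL
    nlinarith
  have h2' : ‖uplus - uk‖ ^ 2 ≤ α * ⟪dk, uk - uplus⟫ := by
    rw [hnormrev]; linarith
  have hdesc2 : Ψ uplus - Ψ uk ≤
      -⟪dk, uk - uplus⟫ - ⟪bk, uplus - uk⟫ + L / 2 * ‖uplus - uk‖ ^ 2 := by
    linarith [hdesc, hgs]
  have hyoung2 : 2 * α * (‖bk‖ * ‖uplus - uk‖) ≤ α ^ 2 * ‖bk‖ ^ 2 + ‖uplus - uk‖ ^ 2 := by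
    nlinarith [sq_nonneg (α * ‖bk‖ - ‖uplus - uk‖)]
  have hLN : 2 * α * L * ‖uplus - uk‖ ^ 2 ≤ ‖uplus - uk‖ ^ 2 := by
    nlinarith [sq_nonneg ‖uplus - uk‖]
  have hm := mul_le_mul_of_nonneg_left hdesc2 (by positivity : (0:ℝ) ≤ 4 * α)
  have hcsα := mul_le_mul_of_nonneg_left hcs hα.le
  have key : 4 * α * (Ψ uplus - Ψ uk) ≤ -‖uplus - uk‖ ^ 2 + 2 * α ^ 2 * ‖bk‖ ^ 2 := by
    nlinarith [hm, hcsα, hyoung2, hLN, h2']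
  have heq : -(1 / (4 * α)) * ‖uplus - uk‖ ^ 2 + α / 2 * ‖bk‖ ^ 2 =
      (-‖uplus - uk‖ ^ 2 + 2 * α ^ 2 * ‖bk‖ ^ 2) / (4 * α) := by
    field_simp
    ring
  rw [heq, le_div_iff₀ (by positivity : (0:ℝ) < 4 * α)]
  nlinarith [key]
end

section
/- Stationarity measure bound from biased projected gradient step: with u⁺ = Proj_U(u − α(∇Ψ(u) + b)), α ≤ 1/(2L_Ψ), L_Ψ the Lipschitz constant of ∇Ψ, the distance of 0 to ∇Ψ(u⁺) + N_U(u⁺) satisfies dist(0, ∇Ψ(u⁺) + N_U(u⁺))² ≤ 2‖b‖² + (9/(2α²))‖u⁺ − u‖². -/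
open scoped RealInnerProductSpace

set_option maxHeartbeats 1000000 in
/-- Stationarity measure bound from a biased projected gradient step: with
`u⁺ = Proj_U(u − α(∇Ψ(u) + b))` (characterized by the variational inequality),
`α ≤ 1/(2L_Ψ)` and `∇Ψ` `L_Ψ`-Lipschitz, the distance of `0` to `∇Ψ(u⁺) + N_U(u⁺)` satisfies
`dist(0, ∇Ψ(u⁺) + N_U(u⁺))² ≤ 2‖b‖² + (9/(2α²))‖u⁺ − u‖²`. -/
theorem statement17 {d : ℕ} (LΨ α : ℝ) (hL : 0 < LΨ) (hα : 0 < α) (hαL : α ≤ 1 / (2 * LΨ))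
    (U : Set (EuclideanSpace ℝ (Fin d)))
    (hUne : U.Nonempty) (hUclosed : IsClosed U) (hUconv : Convex ℝ U)
    (Ψ : EuclideanSpace ℝ (Fin d) → ℝ) (hΨdiff : Differentiable ℝ Ψ)
    (hΨLip : ∀ a b, ‖gradient Ψ a - gradient Ψ b‖ ≤ LΨ * ‖a - b‖)
    (u b uplus : EuclideanSpace ℝ (Fin d)) (hu : u ∈ U) (huplus : uplus ∈ U)
    (hproj : ∀ w ∈ U, ⟪(u - α • (gradient Ψ u + b)) - uplus, w - uplus⟫ ≤ 0) :
    (Metric.infDist 0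
        {v : EuclideanSpace ℝ (Fin d) | ∃ ν,
          (∀ w ∈ U, ⟪ν, w - uplus⟫ ≤ 0) ∧ v = gradient Ψ uplus + ν}) ^ 2 ≤
      2 * ‖b‖ ^ 2 + 9 / (2 * α ^ 2) * ‖uplus - u‖ ^ 2 := by
  set g := gradient Ψ with hg
  set ν : EuclideanSpace ℝ (Fin d) := α⁻¹ • ((u - α • (g u + b)) - uplus) with hν
  set v : EuclideanSpace ℝ (Fin d) := g uplus + ν with hv
  have hνcone : ∀ w ∈ U, ⟪ν, w - uplus⟫ ≤ 0 := by
    intro w hw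
    rw [hν, real_inner_smul_left]
    exact mul_nonpos_of_nonneg_of_nonpos (by positivity) (hproj w hw)
  have hmem : v ∈ {v : EuclideanSpace ℝ (Fin d) | ∃ ν,
      (∀ w ∈ U, ⟪ν, w - uplus⟫ ≤ 0) ∧ v = gradient Ψ uplus + ν} := ⟨ν, hνcone, rfl⟩
  have hle : Metric.infDist 0 {v : EuclideanSpace ℝ (Fin d) | ∃ ν,
      (∀ w ∈ U, ⟪ν, w - uplus⟫ ≤ 0) ∧ v = gradient Ψ uplus + ν} ≤ ‖v‖ := by
    have := Metric.infDist_le_dist_of_mem (x := (0 : EuclideanSpace ℝ (Fin d))) hmem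
    simpa [dist_eq_norm] using this
  have hvnorm : ‖v‖ ≤ ‖b‖ + LΨ * ‖uplus - u‖ + α⁻¹ * ‖uplus - u‖ := by
    have hveq : v = (g uplus - g u) + (-b) + α⁻¹ • (u - uplus) := by
      rw [hv, hν]
      rw [smul_sub, smul_sub, smul_smul, inv_mul_cancel₀ (ne_of_gt hα), one_smul]
      module
    rw [hveq]
    calc ‖(g uplus - g u) + (-b) + α⁻¹ • (u - uplus)‖
        ≤ ‖g uplus - g u‖ + ‖(-b : EuclideanSpace ℝ (Fin d))‖ + ‖α⁻¹ • (u - uplus)‖ :=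
          norm_add₃_le
      _ ≤ LΨ * ‖uplus - u‖ + ‖b‖ + α⁻¹ * ‖uplus - u‖ := by
          have h1 := hΨLip uplus u
          have h2 : ‖α⁻¹ • (u - uplus)‖ = α⁻¹ * ‖uplus - u‖ := by
            rw [norm_smul, Real.norm_eq_abs, abs_of_pos (by positivity), norm_sub_rev]
          simp only [norm_neg]
          linarith
      _ = ‖b‖ + LΨ * ‖uplus - u‖ + α⁻¹ * ‖uplus - u‖ := by ring
  have hD0 : (0:ℝ) ≤ Metric.infDist 0 {v : EuclideanSpace ℝ (Fin d) | ∃ ν,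
      (∀ w ∈ U, ⟪ν, w - uplus⟫ ≤ 0) ∧ v = gradient Ψ uplus + ν} := Metric.infDist_nonneg
  have hDle : Metric.infDist 0 {v : EuclideanSpace ℝ (Fin d) | ∃ ν,
      (∀ w ∈ U, ⟪ν, w - uplus⟫ ≤ 0) ∧ v = gradient Ψ uplus + ν}
      ≤ ‖b‖ + LΨ * ‖uplus - u‖ + α⁻¹ * ‖uplus - u‖ := le_trans hle hvnorm
  have hLα : LΨ * α ≤ 1 / 2 := by
    rw [le_div_iff₀ (by positivity)] at hαL
    nlinarith
  have ht : (0:ℝ) ≤ ‖uplus - u‖ := norm_nonneg _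
  have hb0 : (0:ℝ) ≤ ‖b‖ := norm_nonneg _
  have hkey : LΨ * ‖uplus - u‖ ≤ (1 / (2 * α)) * ‖uplus - u‖ := by
    have : LΨ ≤ 1 / (2 * α) := by
      rw [le_div_iff₀ (by positivity)]; nlinarith
    nlinarith
  have hDle2 : Metric.infDist 0 {v : EuclideanSpace ℝ (Fin d) | ∃ ν,
      (∀ w ∈ U, ⟪ν, w - uplus⟫ ≤ 0) ∧ v = gradient Ψ uplus + ν}
      ≤ ‖b‖ + (3 / (2 * α)) * ‖uplus - u‖ := by
    have : α⁻¹ = 1 / α := (one_div α).symm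
    have h3 : (1 / (2 * α)) * ‖uplus - u‖ + (1/α) * ‖uplus - u‖
        = (3 / (2 * α)) * ‖uplus - u‖ := by field_simp; ring
    calc _ ≤ ‖b‖ + LΨ * ‖uplus - u‖ + α⁻¹ * ‖uplus - u‖ := hDle
      _ ≤ ‖b‖ + (3 / (2 * α)) * ‖uplus - u‖ := by rw [this] at *; linarith [hkey]
  set D := Metric.infDist 0 {v : EuclideanSpace ℝ (Fin d) | ∃ ν,
      (∀ w ∈ U, ⟪ν, w - uplus⟫ ≤ 0) ∧ v = gradient Ψ uplus + ν}
  have hsq : D ^ 2 ≤ (‖b‖ + (3 / (2 * α)) * ‖uplus - u‖) ^ 2 := by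
    apply pow_le_pow_left₀ hD0 hDle2
  have hexp : (‖b‖ + (3 / (2 * α)) * ‖uplus - u‖) ^ 2
      ≤ 2 * ‖b‖ ^ 2 + 9 / (2 * α ^ 2) * ‖uplus - u‖ ^ 2 := by
    set s := (3 / (2 * α)) * ‖uplus - u‖ with hs
    have h2 : (‖b‖ + s) ^ 2 ≤ 2 * ‖b‖ ^ 2 + 2 * s ^ 2 := by nlinarith [sq_nonneg (‖b‖ - s)]
    have h3 : 2 * s ^ 2 = 9 / (2 * α ^ 2) * ‖uplus - u‖ ^ 2 := by
      rw [hs]; field_simp; ring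
    linarith
  linarith
end
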